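/- arXiv:0912.3136 — 3 statements merged into one kernel-verified Lean document; each statement's English description precedes it below -/
import Mathlib

section
/- Let g₁ ≠ g₂ be vertices of G and h₁, h₂, h₃ distinct vertices of H with h₃ ∉ I[h₁,h₂]. Then (g₁,h₃) ∉ I[(g₁,h₁),(g₂,h₂)] in G ⊠ H. -/
open SimpleGraph

/-- The strong product of two simple graphs. -/
def strongProd {α β : Type*} (G : SimpleGraph α) (H : SimpleGraph β) :
    SimpleGraph (α × β) where
  Adj x y := x ≠ y ∧ (x.1 = y.1 ∨ G.Adj x.1 y.1) ∧ (x.2 = y.2 ∨ H.Adj x.2 y.2)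
  symm := by
    constructor
    rintro x y ⟨hne, h1, h2⟩
    exact ⟨hne.symm, h1.imp Eq.symm G.adj_symm, h2.imp Eq.symm H.adj_symm⟩
  loopless := by constructor; rintro x ⟨hne, -, -⟩; exact hne rfl

/-- The closed geodesic interval between two vertices. -/
def interval {V : Type*} (G : SimpleGraph V) (u v : V) : Set V :=
  {w | G.dist u w + G.dist w v = G.dist u v}

/-- The geodetic closure of a set of vertices. -/
def intervalSet {V : Type*} (G : SimpleGraph V) (S : Set V) : Set V :=
  ⋃ u ∈ S, ⋃ v ∈ S, interval G u v

/-- A set is geodetic if its geodetic closure is the whole vertex set. -/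
def IsGeodetic {V : Type*} (G : SimpleGraph V) (S : Set V) : Prop :=
  intervalSet G S = Set.univ

/-- A set is a hull set if iterating the interval operator yields everything. -/
def IsHullSet {V : Type*} (G : SimpleGraph V) (S : Set V) : Prop :=
  ∃ r : ℕ, (intervalSet G)^[r] S = Set.univ

/-- The geodetic number. -/
noncomputable def geodeticNumber {V : Type*} (G : SimpleGraph V) : ℕ :=
  sInf {n : ℕ | ∃ S : Set V, S.ncard = n ∧ IsGeodetic G S}

/-- The hull number. -/
noncomputable def hullNumber {V : Type*} (G : SimpleGraph V) : ℕ :=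
  sInf {n : ℕ | ∃ S : Set V, S.ncard = n ∧ IsHullSet G S}

/-- A vertex is simplicial if its neighborhood induces a complete graph. -/
def IsSimplicial {V : Type*} (G : SimpleGraph V) (v : V) : Prop :=
  ∀ ⦃a b : V⦄, G.Adj v a → G.Adj v b → a ≠ b → G.Adj a b

section Aux
variable {α β : Type*} {G : SimpleGraph α} {H : SimpleGraph β}

lemma strongProd_walk_fst {a b : α} (c : β) (p : G.Walk a b) :
    ∃ w : (strongProd G H).Walk (a, c) (b, c), w.length = p.length := by
  induction p with
  | nil => exact ⟨SimpleGraph.Walk.nil, rfl⟩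
  | @cons u v x h p ih =>
    obtain ⟨w, hw⟩ := ih
    exact ⟨SimpleGraph.Walk.cons (v := (v, c)) ⟨fun he => h.ne (congrArg Prod.fst he),
      Or.inr h, Or.inl rfl⟩ w, by exact congrArg (· + 1) hw⟩

lemma strongProd_walk_snd (a : α) {c d : β} (q : H.Walk c d) :
    ∃ w : (strongProd G H).Walk (a, c) (a, d), w.length = q.length := by
  induction q with
  | nil => exact ⟨SimpleGraph.Walk.nil, rfl⟩
  | @cons u v x h q ih =>
    obtain ⟨w, hw⟩ := ih
    exact ⟨SimpleGraph.Walk.cons (v := (a, v)) ⟨fun he => h.ne (congrArg Prod.snd he),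
      Or.inl rfl, Or.inr h⟩ w, by exact congrArg (· + 1) hw⟩

lemma strongProd_walk_max {a b : α} {c d : β} (p : G.Walk a b) (q : H.Walk c d) :
    ∃ w : (strongProd G H).Walk (a, c) (b, d), w.length = max p.length q.length := by
  induction p generalizing c q with
  | nil =>
    obtain ⟨w, hw⟩ := strongProd_walk_snd (G := G) _ q
    exact ⟨w, by simp [hw]⟩
  | @cons u v x h p ih =>
    cases q with
    | nil =>
      obtain ⟨w, hw⟩ := strongProd_walk_fst (H := H) _ (SimpleGraph.Walk.cons h p)
      exact ⟨w, by simp [hw]⟩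
    | @cons u' v' x' h' q =>
      obtain ⟨w, hw⟩ := ih q
      refine ⟨SimpleGraph.Walk.cons (v := (v, v')) ⟨fun he => h.ne (congrArg Prod.fst he),
        Or.inr h, Or.inr h'⟩ w, ?_⟩
      show w.length + 1 = max (p.length + 1) (q.length + 1)
      omega

lemma strongProd_dist_le_max (hG : G.Connected) (hH : H.Connected)
    (a b : α) (c d : β) :
    (strongProd G H).dist (a, c) (b, d) ≤ max (G.dist a b) (H.dist c d) := by
  obtain ⟨p, hp⟩ := (hG a b).exists_walk_length_eq_dist
  obtain ⟨q, hq⟩ := (hH c d).exists_walk_length_eq_dist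
  obtain ⟨w, hw⟩ := strongProd_walk_max p q
  calc (strongProd G H).dist (a, c) (b, d) ≤ w.length := SimpleGraph.dist_le w
    _ = _ := by rw [hw, hp, hq]

lemma strongProd_snd_dist_le (hH : H.Connected) {x y : α × β}
    (w : (strongProd G H).Walk x y) : H.dist x.2 y.2 ≤ w.length := by
  induction w with
  | nil => simp
  | @cons x z y h w ih =>
    have h2 := h.2.2
    calc H.dist x.2 y.2 ≤ H.dist x.2 z.2 + H.dist z.2 y.2 := hH.dist_triangle
      _ ≤ 1 + w.length := by
        refine Nat.add_le_add ?_ ih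
        rcases h2 with he | ha
        · simp [he, SimpleGraph.dist_self]
        · exact SimpleGraph.dist_le (ha.toWalk)
      _ = (SimpleGraph.Walk.cons h w).length := by simp [Nat.add_comm]

lemma strongProd_connected (hG : G.Connected) (hH : H.Connected) :
    (strongProd G H).Connected := by
  rw [SimpleGraph.connected_iff]
  refine ⟨fun x y => ?_, ⟨(hG.nonempty.some, hH.nonempty.some)⟩⟩
  obtain ⟨p, -⟩ := (hG x.1 y.1).exists_walk_length_eq_dist
  obtain ⟨q, -⟩ := (hH x.2 y.2).exists_walk_length_eq_dist
  obtain ⟨w, -⟩ := strongProd_walk_max p q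
  exact ⟨w⟩

lemma strongProd_snd_dist_le' (hG : G.Connected) (hH : H.Connected) (x y : α × β) :
    H.dist x.2 y.2 ≤ (strongProd G H).dist x y := by
  obtain ⟨w, hw⟩ := ((strongProd_connected hG hH) x y).exists_walk_length_eq_dist
  calc H.dist x.2 y.2 ≤ w.length := strongProd_snd_dist_le hH w
    _ = _ := hw

lemma strongProd_fst_dist_le (hG : G.Connected) {x y : α × β}
    (w : (strongProd G H).Walk x y) : G.dist x.1 y.1 ≤ w.length := by
  induction w with
  | nil => simp
  | @cons x z y h w ih =>
    have h2 := h.2.1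
    calc G.dist x.1 y.1 ≤ G.dist x.1 z.1 + G.dist z.1 y.1 := hG.dist_triangle
      _ ≤ 1 + w.length := by
        refine Nat.add_le_add ?_ ih
        rcases h2 with he | ha
        · simp [he, SimpleGraph.dist_self]
        · exact SimpleGraph.dist_le (ha.toWalk)
      _ = (SimpleGraph.Walk.cons h w).length := by simp [Nat.add_comm]

lemma strongProd_fst_dist_le' (hG : G.Connected) (hH : H.Connected) (x y : α × β) :
    G.dist x.1 y.1 ≤ (strongProd G H).dist x y := by
  obtain ⟨w, hw⟩ := ((strongProd_connected hG hH) x y).exists_walk_length_eq_dist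
  calc G.dist x.1 y.1 ≤ w.length := strongProd_fst_dist_le hG w
    _ = _ := hw

end Aux

theorem strongProd_not_mem_interval_iii {α β : Type*} [Fintype α] [Fintype β]
    (G : SimpleGraph α) (H : SimpleGraph β) (hG : G.Connected) (hH : H.Connected)
    (g₁ g₂ : α) (h₁ h₂ h₃ : β) (hg : g₁ ≠ g₂)
    (h12 : h₁ ≠ h₂) (h13 : h₁ ≠ h₃) (h23 : h₂ ≠ h₃)
    (hmem : h₃ ∉ interval H h₁ h₂) :
    (g₁, h₃) ∉ interval (strongProd G H) (g₁, h₁) (g₂, h₂) := by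
  intro hc
  simp only [interval, Set.mem_setOf_eq] at hc hmem
  have hA := strongProd_snd_dist_le' hG hH (g₁, h₁) (g₁, h₃)
  have hB := strongProd_snd_dist_le' hG hH (g₁, h₃) (g₂, h₂)
  have hBg := strongProd_fst_dist_le' hG hH (g₁, h₃) (g₂, h₂)
  have hC := strongProd_dist_le_max hG hH g₁ g₂ h₁ h₂
  have h1 := hH.pos_dist_of_ne h13
  have htr := hH.dist_triangle (u := h₁) (v := h₃) (w := h₂)
  simp only [Prod.fst, Prod.snd] at hA hB hBg
  omega
end

section
/- If S₁ is a geodetic set of G and S₂ is a geodetic set of H, then S₁ × S₂ is a geodetic set of G ⊠ H. -/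
open SimpleGraph

section Aux
variable {α β : Type*} {G : SimpleGraph α} {H : SimpleGraph β}

/-- Hom into the strong product fixing the second coordinate. -/
def homLeft (G : SimpleGraph α) (H : SimpleGraph β) (h : β) : G →g strongProd G H where
  toFun a := (a, h)
  map_rel' := by
    intro a b hab
    exact ⟨fun he => hab.ne (congrArg Prod.fst he), Or.inr hab, Or.inl rfl⟩

/-- Hom into the strong product fixing the first coordinate. -/
def homRight (G : SimpleGraph α) (H : SimpleGraph β) (g : α) : H →g strongProd G H where
  toFun b := (g, b)
  map_rel' := by
    intro a b hab
    exact ⟨fun he => hab.ne (congrArg Prod.snd he), Or.inl rfl, Or.inr hab⟩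

lemma walk_prod : ∀ {g g' : α} (wg : G.Walk g g') {h h' : β} (wh : H.Walk h h'),
    ∃ w : (strongProd G H).Walk (g, h) (g', h'), w.length = max wg.length wh.length := by
  intro g g' wg
  induction wg with
  | nil =>
    intro h h' wh
    exact ⟨wh.map (homRight G H _), by simp [homRight]⟩
  | cons adj p ih =>
    intro h h' wh
    cases wh with
    | nil =>
      refine ⟨(SimpleGraph.Walk.cons adj p).map (homLeft G H _), by simp [homLeft]⟩
    | cons hadj q =>
      obtain ⟨w, hw⟩ := ih q
      refine ⟨SimpleGraph.Walk.cons
        ⟨fun he => adj.ne (congrArg Prod.fst he), Or.inr adj, Or.inr hadj⟩ w, ?_⟩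
      simp [hw, Nat.succ_max_succ]
      exact congrArg (· + 1) hw

lemma proj_left : ∀ {x y : α × β} (w : (strongProd G H).Walk x y),
    ∃ wg : G.Walk x.1 y.1, wg.length ≤ w.length := by
  intro x y w
  induction w with
  | nil => exact ⟨SimpleGraph.Walk.nil, le_rfl⟩
  | cons a p ih =>
    obtain ⟨wg, hwg⟩ := ih
    rcases a.2.1 with he | hadj
    · exact ⟨wg.copy he.symm rfl, by simp [hwg]; omega⟩
    · exact ⟨SimpleGraph.Walk.cons hadj wg, by simp; omega⟩

lemma proj_right : ∀ {x y : α × β} (w : (strongProd G H).Walk x y),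
    ∃ wh : H.Walk x.2 y.2, wh.length ≤ w.length := by
  intro x y w
  induction w with
  | nil => exact ⟨SimpleGraph.Walk.nil, le_rfl⟩
  | cons a p ih =>
    obtain ⟨wh, hwh⟩ := ih
    rcases a.2.2 with he | hadj
    · exact ⟨wh.copy he.symm rfl, by simp [hwh]; omega⟩
    · exact ⟨SimpleGraph.Walk.cons hadj wh, by simp; omega⟩

lemma strongProd_dist (hG : G.Connected) (hH : H.Connected) (x y : α × β) :
    (strongProd G H).dist x y = max (G.dist x.1 y.1) (H.dist x.2 y.2) := by
  apply le_antisymm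
  · obtain ⟨wg, hwg⟩ := (hG x.1 y.1).exists_walk_length_eq_dist
    obtain ⟨wh, hwh⟩ := (hH x.2 y.2).exists_walk_length_eq_dist
    obtain ⟨w, hw⟩ := walk_prod wg wh
    have := SimpleGraph.dist_le w
    rw [hw, hwg, hwh] at this
    simpa using this
  · have hr : (strongProd G H).Reachable x y := by
      obtain ⟨wg⟩ := hG x.1 y.1
      obtain ⟨wh⟩ := hH x.2 y.2
      obtain ⟨w, -⟩ := walk_prod wg wh
      exact ⟨by simpa using w⟩
    obtain ⟨w, hw⟩ := hr.exists_walk_length_eq_dist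
    obtain ⟨wg, hwg⟩ := proj_left w
    obtain ⟨wh, hwh⟩ := proj_right w
    have h1 := (SimpleGraph.dist_le wg).trans hwg
    have h2 := (SimpleGraph.dist_le wh).trans hwh
    omega

end Aux

theorem strongProd_geodetic_prod {α β : Type*} [Fintype α] [Fintype β]
    (G : SimpleGraph α) (H : SimpleGraph β) (hG : G.Connected) (hH : H.Connected)
    (S₁ : Set α) (S₂ : Set β)
    (h₁ : IsGeodetic G S₁) (h₂ : IsGeodetic H S₂) :
    IsGeodetic (strongProd G H) (S₁ ×ˢ S₂) := by
  have key : ∀ x : α × β, x ∈ intervalSet (strongProd G H) (S₁ ×ˢ S₂) := by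
    rintro ⟨g, h⟩
    have hg : g ∈ intervalSet G S₁ := h₁ ▸ Set.mem_univ g
    have hh : h ∈ intervalSet H S₂ := h₂ ▸ Set.mem_univ h
    simp only [intervalSet, interval, Set.mem_iUnion, Set.mem_setOf_eq] at hg hh ⊢
    obtain ⟨g₁, hg₁, g₂, hg₂, hga⟩ := hg
    obtain ⟨h₁', hh₁, h₂', hh₂, hhb⟩ := hh
    set a₁ := G.dist g₁ g with ha₁
    set a₂ := G.dist g g₂ with ha₂
    set b₁ := H.dist h₁' h with hb₁
    set b₂ := H.dist h h₂' with hb₂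
    have hd := strongProd_dist hG hH
    have hcases : (a₁ ≤ b₁ ∧ a₁ ≤ b₂) ∨ (a₂ ≤ b₁ ∧ a₂ ≤ b₂) ∨
        (b₁ ≤ a₁ ∧ b₁ ≤ a₂) ∨ (b₂ ≤ a₁ ∧ b₂ ≤ a₂) := by omega
    have hsymG : G.dist g g₁ = a₁ := SimpleGraph.dist_comm ..
    have hsymH : H.dist h h₁' = b₁ := SimpleGraph.dist_comm ..
    have hGself : G.dist g₁ g₁ = 0 := SimpleGraph.dist_self ..
    have hGself2 : G.dist g₂ g₂ = 0 := SimpleGraph.dist_self ..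
    have hHself : H.dist h₁' h₁' = 0 := SimpleGraph.dist_self ..
    have hHself2 : H.dist h₂' h₂' = 0 := SimpleGraph.dist_self ..
    have hsymG2 : G.dist g₂ g = a₂ := SimpleGraph.dist_comm ..
    have hsymH2 : H.dist h₂' h = b₂ := SimpleGraph.dist_comm ..
    rcases hcases with ⟨c1, c2⟩ | ⟨c1, c2⟩ | ⟨c1, c2⟩ | ⟨c1, c2⟩
    · exact ⟨⟨g₁, h₁'⟩, ⟨hg₁, hh₁⟩, ⟨g₁, h₂'⟩, ⟨hg₁, hh₂⟩, by
        simp only [hd]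
        rw [hsymG, hGself]; omega⟩
    · exact ⟨⟨g₂, h₁'⟩, ⟨hg₂, hh₁⟩, ⟨g₂, h₂'⟩, ⟨hg₂, hh₂⟩, by
        simp only [hd]
        rw [hsymG2, hGself2]; omega⟩
    · exact ⟨⟨g₁, h₁'⟩, ⟨hg₁, hh₁⟩, ⟨g₂, h₁'⟩, ⟨hg₂, hh₁⟩, by
        simp only [hd]
        rw [hsymH, hHself]; omega⟩
    · exact ⟨⟨g₁, h₂'⟩, ⟨hg₁, hh₂⟩, ⟨g₂, h₂'⟩, ⟨hg₂, hh₂⟩, by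
        simp only [hd]
        rw [hsymH2, hHself2]; omega⟩
  exact Set.eq_univ_of_forall key
end

section
/- For any two connected graphs G and H, the hull number of G ⊠ H is at most the product of the hull numbers of G and H: h(G ⊠ H) ≤ h(G)·h(H). -/
open SimpleGraph

section aux
variable {α β : Type*} (G : SimpleGraph α) (H : SimpleGraph β)

/-- embedding into the first coordinate is a graph hom -/
def homFst (b : β) : G →g strongProd G H where
  toFun a := (a, b)
  map_rel' := by
    intro x y h
    exact ⟨by simp [h.ne], Or.inr h, Or.inl rfl⟩

def homSnd (a : α) : H →g strongProd G H where
  toFun b := (a, b)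
  map_rel' := by
    intro x y h
    exact ⟨by simp [h.ne], Or.inl rfl, Or.inr h⟩

variable {G H}

lemma dist_fst_le (hG : G.Connected) (x y : α) (b : β) :
    (strongProd G H).dist (x, b) (y, b) ≤ G.dist x y := by
  obtain ⟨p, hp⟩ := hG.exists_walk_length_eq_dist x y
  calc (strongProd G H).dist (x, b) (y, b) ≤ (p.map (homFst G H b)).length :=
        SimpleGraph.dist_le _
    _ = G.dist x y := by rw [SimpleGraph.Walk.length_map, hp]

lemma le_dist_fst (hG : G.Connected) {x y : α × β}
    (p : (strongProd G H).Walk x y) : G.dist x.1 y.1 ≤ p.length := by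
  induction p with
  | nil => simp
  | @cons u v w h q ih =>
    rcases h.2.1 with h1 | h1
    · calc G.dist u.1 w.1 = G.dist v.1 w.1 := by rw [h1]
        _ ≤ q.length := ih
        _ ≤ q.length + 1 := Nat.le_succ _
    · calc G.dist u.1 w.1 ≤ G.dist u.1 v.1 + G.dist v.1 w.1 := hG.dist_triangle
        _ ≤ 1 + q.length := Nat.add_le_add (SimpleGraph.dist_le h1.toWalk) ih
        _ = q.length + 1 := Nat.add_comm _ _

lemma dist_fst (hG : G.Connected) (x y : α) (b : β) :
    (strongProd G H).dist (x, b) (y, b) = G.dist x y := by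
  refine le_antisymm (dist_fst_le hG x y b) ?_
  obtain ⟨p, hp⟩ := hG.exists_walk_length_eq_dist x y
  have hr : (strongProd G H).Reachable (x, b) (y, b) := ⟨p.map (homFst G H b)⟩
  obtain ⟨q, hq⟩ := hr.exists_walk_length_eq_dist
  rw [← hq]; exact le_dist_fst hG q

lemma le_dist_snd (hH : H.Connected) {x y : α × β}
    (p : (strongProd G H).Walk x y) : H.dist x.2 y.2 ≤ p.length := by
  induction p with
  | nil => simp
  | @cons u v w h q ih =>
    rcases h.2.2 with h1 | h1
    · calc H.dist u.2 w.2 = H.dist v.2 w.2 := by rw [h1]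
        _ ≤ q.length := ih
        _ ≤ q.length + 1 := Nat.le_succ _
    · calc H.dist u.2 w.2 ≤ H.dist u.2 v.2 + H.dist v.2 w.2 := hH.dist_triangle
        _ ≤ 1 + q.length := Nat.add_le_add (SimpleGraph.dist_le h1.toWalk) ih
        _ = q.length + 1 := Nat.add_comm _ _

lemma dist_snd (hH : H.Connected) (a : α) (b c : β) :
    (strongProd G H).dist (a, b) (a, c) = H.dist b c := by
  refine le_antisymm ?_ ?_
  · obtain ⟨p, hp⟩ := hH.exists_walk_length_eq_dist b c
    calc (strongProd G H).dist (a, b) (a, c) ≤ (p.map (homSnd G H a)).length :=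
          SimpleGraph.dist_le _
      _ = H.dist b c := by rw [SimpleGraph.Walk.length_map, hp]
  · obtain ⟨p, hp⟩ := hH.exists_walk_length_eq_dist b c
    have hr : (strongProd G H).Reachable (a, b) (a, c) := ⟨p.map (homSnd G H a)⟩
    obtain ⟨q, hq⟩ := hr.exists_walk_length_eq_dist
    rw [← hq]; exact le_dist_snd hH q

lemma mem_intervalSet {V : Type*} {G : SimpleGraph V} {S : Set V} {w : V} :
    w ∈ intervalSet G S ↔ ∃ u ∈ S, ∃ v ∈ S, w ∈ interval G u v := by
  simp [intervalSet]

lemma subset_intervalSet {V : Type*} (G : SimpleGraph V) (S : Set V) :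
    S ⊆ intervalSet G S := by
  intro u hu
  exact mem_intervalSet.2 ⟨u, hu, u, hu, by simp [interval, SimpleGraph.dist_self]⟩

lemma intervalSet_mono {V : Type*} (G : SimpleGraph V) {S T : Set V} (h : S ⊆ T) :
    intervalSet G S ⊆ intervalSet G T := by
  intro w hw
  obtain ⟨u, hu, v, hv, hw⟩ := mem_intervalSet.1 hw
  exact mem_intervalSet.2 ⟨u, h hu, v, h hv, hw⟩

lemma key1 (hG : G.Connected) (A : Set α) (B : Set β) :
    (intervalSet G A) ×ˢ B ⊆ intervalSet (strongProd G H) (A ×ˢ B) := by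
  rintro ⟨w, b⟩ ⟨hw, hb⟩
  obtain ⟨u, hu, v, hv, hwi⟩ := mem_intervalSet.1 hw
  refine mem_intervalSet.2 ⟨(u, b), ⟨hu, hb⟩, (v, b), ⟨hv, hb⟩, ?_⟩
  show (strongProd G H).dist (u, b) (w, b) + (strongProd G H).dist (w, b) (v, b)
      = (strongProd G H).dist (u, b) (v, b)
  rw [dist_fst hG, dist_fst hG, dist_fst hG]
  exact hwi

lemma key2 (hH : H.Connected) (A : Set α) (B : Set β) :
    A ×ˢ (intervalSet H B) ⊆ intervalSet (strongProd G H) (A ×ˢ B) := by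
  rintro ⟨a, z⟩ ⟨ha, hz⟩
  obtain ⟨u, hu, v, hv, hzi⟩ := mem_intervalSet.1 hz
  refine mem_intervalSet.2 ⟨(a, u), ⟨ha, hu⟩, (a, v), ⟨ha, hv⟩, ?_⟩
  show (strongProd G H).dist (a, u) (a, z) + (strongProd G H).dist (a, z) (a, v)
      = (strongProd G H).dist (a, u) (a, v)
  rw [dist_snd hH, dist_snd hH, dist_snd hH]
  exact hzi

lemma iter_prod (hG : G.Connected) (hH : H.Connected) (A : Set α) (B : Set β) :
    ∀ k : ℕ, ((intervalSet G)^[k] A) ×ˢ ((intervalSet H)^[k] B)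
      ⊆ (intervalSet (strongProd G H))^[2 * k] (A ×ˢ B) := by
  intro k
  induction k with
  | zero => simp
  | succ k ih =>
    have h1 : ((intervalSet G)^[k+1] A) ×ˢ ((intervalSet H)^[k+1] B)
        ⊆ intervalSet (strongProd G H) (((intervalSet G)^[k+1] A) ×ˢ ((intervalSet H)^[k] B)) := by
      rw [Function.iterate_succ_apply' (intervalSet H)]
      exact key2 hH _ _
    have h2 : ((intervalSet G)^[k+1] A) ×ˢ ((intervalSet H)^[k] B)
        ⊆ intervalSet (strongProd G H) (((intervalSet G)^[k] A) ×ˢ ((intervalSet H)^[k] B)) := by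
      rw [Function.iterate_succ_apply' (intervalSet G)]
      exact key1 hG _ _
    calc ((intervalSet G)^[k+1] A) ×ˢ ((intervalSet H)^[k+1] B)
        ⊆ intervalSet (strongProd G H)
            (intervalSet (strongProd G H) (((intervalSet G)^[k] A) ×ˢ ((intervalSet H)^[k] B))) :=
          h1.trans (intervalSet_mono _ h2)
      _ ⊆ intervalSet (strongProd G H)
            (intervalSet (strongProd G H) ((intervalSet (strongProd G H))^[2*k] (A ×ˢ B))) :=
          intervalSet_mono _ (intervalSet_mono _ ih)
      _ = (intervalSet (strongProd G H))^[2*(k+1)] (A ×ˢ B) := by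
          rw [show 2*(k+1) = 2*k + 1 + 1 by ring, Function.iterate_succ_apply',
            Function.iterate_succ_apply']

lemma iterate_eq_univ_of_le {V : Type*} {G : SimpleGraph V} {S : Set V} {r k : ℕ}
    (h : (intervalSet G)^[r] S = Set.univ) (hk : r ≤ k) :
    (intervalSet G)^[k] S = Set.univ := by
  obtain ⟨m, rfl⟩ := Nat.exists_eq_add_of_le hk
  induction m with
  | zero => simpa using h
  | succ m ih =>
    rw [show r + (m+1) = (r + m) + 1 by ring, Function.iterate_succ_apply']
    refine Set.eq_univ_of_univ_subset ?_
    rw [← ih (Nat.le_add_right _ _)]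
    exact subset_intervalSet _ _
end aux

theorem strongProd_hullNumber_le {α β : Type*} [Fintype α] [Fintype β]
    (G : SimpleGraph α) (H : SimpleGraph β) (hG : G.Connected) (hH : H.Connected) :
    hullNumber (strongProd G H) ≤ hullNumber G * hullNumber H := by
  classical
  have hneG : {n : ℕ | ∃ S : Set α, S.ncard = n ∧ IsHullSet G S}.Nonempty :=
    ⟨(Set.univ).ncard, Set.univ, rfl, 0, rfl⟩
  have hneH : {n : ℕ | ∃ S : Set β, S.ncard = n ∧ IsHullSet H S}.Nonempty :=
    ⟨(Set.univ).ncard, Set.univ, rfl, 0, rfl⟩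
  obtain ⟨S, hScard, rS, hS⟩ := Nat.sInf_mem hneG
  obtain ⟨T, hTcard, rT, hT⟩ := Nat.sInf_mem hneH
  have hk := iter_prod hG hH S T (max rS rT)
  rw [iterate_eq_univ_of_le hS (le_max_left _ _),
    iterate_eq_univ_of_le hT (le_max_right _ _), Set.univ_prod_univ] at hk
  have hhull : IsHullSet (strongProd G H) (S ×ˢ T) :=
    ⟨2 * max rS rT, Set.eq_univ_of_univ_subset hk⟩
  have hcard : (S ×ˢ T).ncard = S.ncard * T.ncard := by
    rw [Set.ncard_eq_toFinset_card', Set.ncard_eq_toFinset_card', Set.ncard_eq_toFinset_card']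
    simp [Set.toFinset_prod]
  calc hullNumber (strongProd G H) ≤ (S ×ˢ T).ncard :=
        Nat.sInf_le ⟨S ×ˢ T, rfl, hhull⟩
    _ = hullNumber G * hullNumber H := by rw [hcard, hScard, hTcard]; rfl
end
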